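/- If every separated Bessel sequence of unit vectors in a Hilbert space can be partitioned into finitely many Riesz sequences (WFC), then every Bessel sequence of unit vectors can be partitioned into finitely many Riesz sequences (FC'). -/

import Mathlib

lemma bessel_dual {H : Type} [NormedAddCommGroup H] [InnerProductSpace ℂ H]
    (x : ℕ → H) (hx : ∀ n, ‖x n‖ = 1) {B : ℝ} (hB : 0 ≤ B)
    (hBes : ∀ (s : Finset ℕ) (a : ℕ → ℂ),
      ‖∑ n ∈ s, a n • x n‖ ^ 2 ≤ B * ∑ n ∈ s, ‖a n‖ ^ 2)
    (n : ℕ) (s : Finset ℕ) :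
    ∑ k ∈ s, ‖(inner ℂ (x k) (x n) : ℂ)‖ ^ 2 ≤ B := by
  set a : ℕ → ℂ := fun k => inner ℂ (x k) (x n) with ha
  set t : ℝ := ∑ k ∈ s, ‖a k‖ ^ 2 with ht
  have ht0 : 0 ≤ t := Finset.sum_nonneg fun k _ => by positivity
  rcases eq_or_lt_of_le ht0 with h | h
  · rw [← h]; exact hB
  set v : H := ∑ k ∈ s, a k • x k with hv
  have hinner : (inner ℂ v (x n) : ℂ) = (t : ℂ) := by
    rw [hv, sum_inner]
    simp only [inner_smul_left]
    rw [ht]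
    push_cast
    refine Finset.sum_congr rfl fun k _ => ?_
    rw [ha]
    simp only []
    rw [mul_comm, Complex.mul_conj']
  have h1 : t ≤ ‖v‖ := by
    have := norm_inner_le_norm (𝕜 := ℂ) v (x n)
    rw [hx n, mul_one, hinner] at this
    calc t = ‖(t:ℂ)‖ := by rw [Complex.norm_real, Real.norm_of_nonneg ht0]
      _ ≤ ‖v‖ := this
  have h2 : ‖v‖ ^ 2 ≤ B * t := hBes s a
  nlinarith

open Classical in
noncomputable def greedyCol (D : ℕ) (adj : ℕ → ℕ → Prop) : ℕ → Fin (D + 1)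
  | n =>
    if h : ((Finset.univ : Finset (Fin (D + 1))) \
        (((Finset.range n).filter (fun k => adj n k)).attach.image
          (fun k => greedyCol D adj k.1))).Nonempty then
      h.choose
    else ⟨0, Nat.succ_pos D⟩
  decreasing_by all_goals exact Finset.mem_range.mp (Finset.mem_filter.mp k.2).1

open Classical in
lemma greedyCol_proper (D : ℕ) (adj : ℕ → ℕ → Prop)
    (hdeg : ∀ n, ∀ t : Finset ℕ, (∀ k ∈ t, k < n ∧ adj n k) → t.card ≤ D)
    {n k : ℕ} (hk : k < n) (hadj : adj n k) :
    greedyCol D adj n ≠ greedyCol D adj k := by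
  set S : Finset (Fin (D + 1)) :=
    ((Finset.range n).filter (fun k => adj n k)).attach.image
      (fun k => greedyCol D adj k.1) with hS
  have hcard : S.card ≤ D := by
    calc S.card ≤ ((Finset.range n).filter (fun k => adj n k)).attach.card :=
          Finset.card_image_le
      _ = ((Finset.range n).filter (fun k => adj n k)).card := Finset.card_attach
      _ ≤ D := hdeg n _ fun k hk => ⟨Finset.mem_range.mp (Finset.mem_filter.mp hk).1,
          (Finset.mem_filter.mp hk).2⟩
  have hne : ((Finset.univ : Finset (Fin (D + 1))) \ S).Nonempty := by
    rw [Finset.sdiff_nonempty]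
    intro hsub
    have := Finset.card_le_card hsub
    simp [Finset.card_univ] at this
    omega
  have heq : greedyCol D adj n = hne.choose := by
    rw [greedyCol]
    simp only [← hS]
    rw [dif_pos hne]
  have hmem := hne.choose_spec
  rw [Finset.mem_sdiff] at hmem
  intro hcontra
  apply hmem.2
  rw [← heq, hcontra, hS]
  apply Finset.mem_image.mpr
  have hkmem : k ∈ (Finset.range n).filter (fun k => adj n k) := by
    simp [Finset.mem_filter, Finset.mem_range, hk, hadj]
  exact ⟨⟨k, hkmem⟩, Finset.mem_attach _ _, rfl⟩

open Classical in
lemma class_step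
    (WFC : ∀ (H : Type) (_ : NormedAddCommGroup H) (_ : @InnerProductSpace ℂ H _ _)
        (_ : CompleteSpace H) (x : ℕ → H),
        (∀ n, ‖x n‖ = 1) →
        (∃ B > 0, ∀ (s : Finset ℕ) (a : ℕ → ℂ),
            ‖∑ n ∈ s, a n • x n‖ ^ 2 ≤ B * ∑ n ∈ s, ‖a n‖ ^ 2) →
        (∃ γ < (1 : ℝ), ∀ n k : ℕ, n ≠ k → ‖(inner ℂ (x n) (x k) : ℂ)‖ ≤ γ) →
        ∃ (N : ℕ) (f : ℕ → Fin N), ∀ c : Fin N,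
          ∃ A > 0, ∃ B > 0, ∀ (s : Finset ℕ) (a : ℕ → ℂ), (∀ n ∈ s, f n = c) →
            A * ∑ n ∈ s, ‖a n‖ ^ 2 ≤ ‖∑ n ∈ s, a n • x n‖ ^ 2 ∧
            ‖∑ n ∈ s, a n • x n‖ ^ 2 ≤ B * ∑ n ∈ s, ‖a n‖ ^ 2)
    {H : Type} [NormedAddCommGroup H] [InnerProductSpace ℂ H] [CompleteSpace H]
    (x : ℕ → H) (hx : ∀ n, ‖x n‖ = 1) {B : ℝ} (hB : 0 < B)
    (hBes : ∀ (s : Finset ℕ) (a : ℕ → ℂ),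
      ‖∑ n ∈ s, a n • x n‖ ^ 2 ≤ B * ∑ n ∈ s, ‖a n‖ ^ 2)
    (P : ℕ → Prop)
    (hsep : ∀ n k, n ≠ k → P n → P k → ‖(inner ℂ (x n) (x k) : ℂ)‖ ≤ 1/2) :
    ∃ (N : ℕ) (f : ℕ → Fin N), ∀ c : Fin N,
      ∃ A > 0, ∃ B' > 0, ∀ (s : Finset ℕ) (a : ℕ → ℂ),
        (∀ n ∈ s, P n) → (∀ n ∈ s, f n = c) →
          A * ∑ n ∈ s, ‖a n‖ ^ 2 ≤ ‖∑ n ∈ s, a n • x n‖ ^ 2 ∧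
          ‖∑ n ∈ s, a n • x n‖ ^ 2 ≤ B' * ∑ n ∈ s, ‖a n‖ ^ 2 := by
  set F : Type := ↥(lp (fun _ : ℕ => ℂ) 2) with hF
  set H' : Type := WithLp 2 (H × F) with hH'
  set e : ℕ → F := fun n => lp.single 2 n (1 : ℂ) with he
  have honb : Orthonormal ℂ e := by
    rw [orthonormal_iff_ite]
    intro i j
    rw [he]
    simp only []
    rw [lp.inner_single_left]
    rcases eq_or_ne i j with h | h
    · simp [h, lp.single_apply_self]
    · simp [lp.single_apply_ne (E := fun _ : ℕ => ℂ) 2 j 1 h, h]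
  set L : H' ≃ₗ[ℂ] H × F := WithLp.linearEquiv 2 ℂ (H × F) with hL
  set v : ℕ → H × F := fun n => if P n then ((x n, 0) : H × F) else ((0, e n) : H × F) with hv
  set y : ℕ → H' := fun n => L.symm (v n) with hy
  -- components of L.symm
  have hLfst : ∀ w : H × F, (L.symm w).fst = w.1 := fun w => rfl
  have hLsnd : ∀ w : H × F, (L.symm w).snd = w.2 := fun w => rfl
  have hnormsq : ∀ w : H × F, ‖L.symm w‖ ^ 2 = ‖w.1‖ ^ 2 + ‖w.2‖ ^ 2 := by
    intro w
    rw [WithLp.prod_norm_sq_eq_of_L2, hLfst, hLsnd]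
  -- sum splitting
  have hsum : ∀ (s : Finset ℕ) (a : ℕ → ℂ),
      ∑ n ∈ s, a n • y n
        = L.symm (∑ n ∈ s.filter P, a n • x n, ∑ n ∈ s.filter (fun n => ¬ P n), a n • e n) := by
    intro s a
    rw [hy]
    simp only []
    have step : ∑ n ∈ s, a n • L.symm (v n) = L.symm (∑ n ∈ s, a n • v n) := by
      rw [map_sum]
      exact Finset.sum_congr rfl fun n _ => (map_smul L.symm (a n) (v n)).symm
    rw [step]
    congr 1
    rw [Prod.ext_iff]
    constructor
    · rw [Prod.fst_sum]
      simp only [hv, Prod.smul_fst]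
      rw [Finset.sum_filter]
      refine Finset.sum_congr rfl fun n _ => ?_
      by_cases h : P n <;> simp [h]
    · rw [Prod.snd_sum]
      simp only [hv, Prod.smul_snd]
      rw [Finset.sum_filter]
      refine Finset.sum_congr rfl fun n _ => ?_
      by_cases h : P n <;> simp [h]
  have hunit : ∀ n, ‖y n‖ = 1 := by
    intro n
    have h2 : ‖y n‖ ^ 2 = 1 := by
      rw [hy]
      simp only []
      rw [hnormsq, hv]
      simp only []
      by_cases h : P n
      · simp [h, hx n]
      · simp [h, honb.1 n]
    nlinarith [norm_nonneg (y n)]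
  have hBes' : ∀ (s : Finset ℕ) (a : ℕ → ℂ),
      ‖∑ n ∈ s, a n • y n‖ ^ 2 ≤ (B + 1) * ∑ n ∈ s, ‖a n‖ ^ 2 := by
    intro s a
    rw [hsum, hnormsq]
    simp only []
    have h1 : ‖∑ n ∈ s.filter P, a n • x n‖ ^ 2 ≤ B * ∑ n ∈ s.filter P, ‖a n‖ ^ 2 :=
      hBes _ a
    have h2 : ‖∑ n ∈ s.filter (fun n => ¬ P n), a n • e n‖ ^ 2
        = ∑ n ∈ s.filter (fun n => ¬ P n), ‖a n‖ ^ 2 := by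
      rw [norm_sq_eq_re_inner (𝕜 := ℂ), honb.inner_sum a a]
      rw [show (∑ i ∈ s.filter (fun n => ¬ P n), (starRingEnd ℂ) (a i) * a i)
          = ((∑ i ∈ s.filter (fun n => ¬ P n), ‖a i‖ ^ 2 : ℝ) : ℂ) by
        push_cast
        exact Finset.sum_congr rfl fun i _ => by rw [mul_comm, Complex.mul_conj']]
      simp [← Complex.ofReal_pow]
    have hsplit : ∑ n ∈ s.filter P, ‖a n‖ ^ 2 + ∑ n ∈ s.filter (fun n => ¬ P n), ‖a n‖ ^ 2
        = ∑ n ∈ s, ‖a n‖ ^ 2 := Finset.sum_filter_add_sum_filter_not s P _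
    have hp1 : (0:ℝ) ≤ ∑ n ∈ s.filter P, ‖a n‖ ^ 2 :=
      Finset.sum_nonneg fun n _ => by positivity
    have hp2 : (0:ℝ) ≤ ∑ n ∈ s.filter (fun n => ¬ P n), ‖a n‖ ^ 2 :=
      Finset.sum_nonneg fun n _ => by positivity
    nlinarith
  have hsep' : ∀ n k : ℕ, n ≠ k → ‖(inner ℂ (y n) (y k) : ℂ)‖ ≤ 1/2 := by
    intro n k hnk
    have hip : (inner ℂ (y n) (y k) : ℂ)
        = inner ℂ (v n).1 (v k).1 + inner ℂ (v n).2 (v k).2 := rfl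
    rw [hip, hv]
    simp only []
    by_cases hn : P n <;> by_cases hk : P k
    · simpa [hn, hk] using hsep n k hnk hn hk
    · simp [hn, hk]
    · simp [hn, hk]
    · simp [hn, hk, honb.2 hnk]
  obtain ⟨N, f, hf⟩ := WFC H' inferInstance inferInstance inferInstance y hunit
    ⟨B + 1, by linarith, hBes'⟩ ⟨1/2, by norm_num, hsep'⟩
  refine ⟨N, f, fun c => ?_⟩
  obtain ⟨A, hA, B', hB', hbd⟩ := hf c
  refine ⟨A, hA, B', hB', fun s a hsP hsf => ?_⟩
  have hbs := hbd s a hsf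
  have hkey : ‖∑ n ∈ s, a n • y n‖ ^ 2 = ‖∑ n ∈ s, a n • x n‖ ^ 2 := by
    rw [hsum, hnormsq]
    simp only []
    rw [Finset.filter_true_of_mem hsP,
      Finset.filter_false_of_mem (fun n hn => by simp [hsP n hn])]
    simp
  rw [hkey] at hbs
  exact hbs
theorem WFC_implies_FC' :
    (∀ (H : Type) (_ : NormedAddCommGroup H) (_ : @InnerProductSpace ℂ H _ _)
        (_ : CompleteSpace H) (x : ℕ → H),
        (∀ n, ‖x n‖ = 1) →
        (∃ B > 0, ∀ (s : Finset ℕ) (a : ℕ → ℂ),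
            ‖∑ n ∈ s, a n • x n‖ ^ 2 ≤ B * ∑ n ∈ s, ‖a n‖ ^ 2) →
        (∃ γ < (1 : ℝ), ∀ n k : ℕ, n ≠ k → ‖(inner ℂ (x n) (x k) : ℂ)‖ ≤ γ) →
        ∃ (N : ℕ) (f : ℕ → Fin N), ∀ c : Fin N,
          ∃ A > 0, ∃ B > 0, ∀ (s : Finset ℕ) (a : ℕ → ℂ), (∀ n ∈ s, f n = c) →
            A * ∑ n ∈ s, ‖a n‖ ^ 2 ≤ ‖∑ n ∈ s, a n • x n‖ ^ 2 ∧
            ‖∑ n ∈ s, a n • x n‖ ^ 2 ≤ B * ∑ n ∈ s, ‖a n‖ ^ 2) →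
    (∀ (H : Type) (_ : NormedAddCommGroup H) (_ : @InnerProductSpace ℂ H _ _)
        (_ : CompleteSpace H) (x : ℕ → H),
        (∀ n, ‖x n‖ = 1) →
        (∃ B > 0, ∀ (s : Finset ℕ) (a : ℕ → ℂ),
            ‖∑ n ∈ s, a n • x n‖ ^ 2 ≤ B * ∑ n ∈ s, ‖a n‖ ^ 2) →
        ∃ (N : ℕ) (f : ℕ → Fin N), ∀ c : Fin N,
          ∃ A > 0, ∃ B > 0, ∀ (s : Finset ℕ) (a : ℕ → ℂ), (∀ n ∈ s, f n = c) →
            A * ∑ n ∈ s, ‖a n‖ ^ 2 ≤ ‖∑ n ∈ s, a n • x n‖ ^ 2 ∧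
            ‖∑ n ∈ s, a n • x n‖ ^ 2 ≤ B * ∑ n ∈ s, ‖a n‖ ^ 2) := by
  intro WFC H _ _ _ x hx hBesE
  classical
  obtain ⟨B, hB, hBes⟩ := hBesE
  set adj : ℕ → ℕ → Prop := fun n k => n ≠ k ∧ 1/2 < ‖(inner ℂ (x n) (x k) : ℂ)‖ with hadj
  have hadjsymm : ∀ n k, adj n k → adj k n := by
    intro n k ⟨h1, h2⟩
    refine ⟨h1.symm, ?_⟩
    rwa [← inner_conj_symm, RCLike.norm_conj] at h2
  set D : ℕ := ⌈4 * B⌉₊ with hD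
  have hdeg : ∀ n, ∀ t : Finset ℕ, (∀ k ∈ t, k < n ∧ adj n k) → t.card ≤ D := by
    intro n t ht
    have hsumle := bessel_dual x hx hB.le hBes n t
    have hlow : (t.card : ℝ) * (1/4) ≤ ∑ k ∈ t, ‖(inner ℂ (x k) (x n) : ℂ)‖ ^ 2 := by
      rw [show (t.card : ℝ) * (1/4) = ∑ _k ∈ t, (1/4 : ℝ) by
        rw [Finset.sum_const, nsmul_eq_mul]]
      refine Finset.sum_le_sum fun k hk => ?_
      have hk2 := (ht k hk).2
      have h2 : 1/2 < ‖(inner ℂ (x k) (x n) : ℂ)‖ := by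
        rw [← inner_conj_symm, RCLike.norm_conj]
        exact hk2.2
      nlinarith [norm_nonneg (inner ℂ (x k) (x n) : ℂ)]
    have hcard : (t.card : ℝ) ≤ 4 * B := by nlinarith
    have : (t.card : ℝ) ≤ (D : ℝ) := le_trans hcard (Nat.le_ceil _)
    exact_mod_cast this
  set col : ℕ → Fin (D + 1) := greedyCol D adj with hcol
  have hproper : ∀ n k : ℕ, n ≠ k → col n = col k → ‖(inner ℂ (x n) (x k) : ℂ)‖ ≤ 1/2 := by
    intro n k hnk hc
    by_contra hgt
    push_neg at hgt
    have hadjnk : adj n k := ⟨hnk, hgt⟩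
    rcases Nat.lt_or_ge k n with h | h
    · exact greedyCol_proper D adj hdeg h hadjnk hc
    · have hkn : n < k := lt_of_le_of_ne h hnk
      exact greedyCol_proper D adj hdeg hkn (hadjsymm _ _ hadjnk) hc.symm
  have hcs : ∀ i : Fin (D + 1),
      ∃ (N : ℕ) (f : ℕ → Fin N), ∀ c : Fin N,
        ∃ A > 0, ∃ B' > 0, ∀ (s : Finset ℕ) (a : ℕ → ℂ),
          (∀ n ∈ s, col n = i) → (∀ n ∈ s, f n = c) →
            A * ∑ n ∈ s, ‖a n‖ ^ 2 ≤ ‖∑ n ∈ s, a n • x n‖ ^ 2 ∧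
            ‖∑ n ∈ s, a n • x n‖ ^ 2 ≤ B' * ∑ n ∈ s, ‖a n‖ ^ 2 := by
    intro i
    exact class_step WFC x hx hB hBes (fun n => col n = i)
      (fun n k hnk hn hk => hproper n k hnk (hn.trans hk.symm))
  choose N f hf using hcs
  set M : ℕ := (Finset.univ : Finset (Fin (D + 1))).sup N with hM
  have hNM : ∀ i, N i ≤ M := fun i => Finset.le_sup (Finset.mem_univ i)
  refine ⟨(D + 1) * M, fun n => finProdFinEquiv (col n, Fin.castLE (hNM (col n)) (f (col n) n)), fun c => ?_⟩
  set p : Fin (D + 1) × Fin M := finProdFinEquiv.symm c with hp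
  by_cases hj : (p.2 : ℕ) < N p.1
  · obtain ⟨A, hA, B', hB', hbd⟩ := hf p.1 ⟨p.2, hj⟩
    refine ⟨A, hA, B', hB', fun s a hs => ?_⟩
    have hkey : ∀ n ∈ s, col n = p.1 ∧
        Fin.castLE (hNM (col n)) (f (col n) n) = p.2 := by
      intro n hn
      have h2 := congrArg finProdFinEquiv.symm (hs n hn)
      rw [Equiv.symm_apply_apply] at h2
      exact ⟨congrArg Prod.fst h2, congrArg Prod.snd h2⟩
    refine hbd s a (fun n hn => (hkey n hn).1) (fun n hn => ?_)
    have h1 := (hkey n hn).1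
    have h2 := (hkey n hn).2
    apply Fin.ext
    have hval : ((f (col n) n : ℕ)) = (p.2 : ℕ) := by rw [← h2]; rfl
    show ((f p.1 n : ℕ)) = (p.2 : ℕ)
    rw [← h1]
    exact hval
  · refine ⟨1, one_pos, 1, one_pos, fun s a hs => ?_⟩
    have hse : s = ∅ := by
      rw [Finset.eq_empty_iff_forall_notMem]
      intro n hn
      have h2 := congrArg finProdFinEquiv.symm (hs n hn)
      rw [Equiv.symm_apply_apply] at h2
      have hc1 : col n = p.1 := congrArg Prod.fst h2
      have hc2 : ((f (col n) n : ℕ)) = (p.2 : ℕ) := by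
        rw [← congrArg Prod.snd h2]; rfl
      apply hj
      rw [← hc1, ← hc2]
      exact (f (col n) n).isLt
    subst hse
    simp
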